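/- Let H be a compact subset of (0,∞) × ℝ. There is a constant κ ∈ (0,∞) such that for every h ∈ H, every càdlàg ψ : [0,∞) → ℝ² with ψ₁(0) ≥ 0, and every 0 ≤ s ≤ t: if φ = Γ^h(ψ) is the solution of the Skorohod problem on ℝ₊ × ℝ with reflection direction h, then osc(φ, [s,t]) ≤ κ · osc(ψ, [s,t]), where osc(ξ, I) = sup{‖ξ(u) − ξ(v)‖ : u, v ∈ I}. -/

import Mathlib

open Filter Set

/-- A function is càdlàg: right-continuous with left limits. -/
def IsCadlag {E : Type*} [TopologicalSpace E] (f : ℝ → E) : Prop :=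
  ∀ t : ℝ, ContinuousWithinAt f (Set.Ici t) t ∧
    ∃ l : E, Filter.Tendsto f (nhdsWithin t (Set.Iio t)) (nhds l)

lemma abs_coord_le_norm (x : EuclideanSpace ℝ (Fin 2)) (i : Fin 2) : |x i| ≤ ‖x‖ := by
  rw [EuclideanSpace.norm_eq]
  have : |x i| = Real.sqrt (‖x i‖ ^ 2) := by rw [Real.sqrt_sq_eq_abs]; simp
  rw [this]
  apply Real.sqrt_le_sqrt
  exact Finset.single_le_sum (f := fun j => ‖x j‖ ^ 2) (fun j _ => sq_nonneg _)
    (Finset.mem_univ i)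

/-- A càdlàg function is bounded on compact intervals. -/
lemma IsCadlag.bounded_on_Icc {E : Type*} [NormedAddCommGroup E] {f : ℝ → E}
    (hf : IsCadlag f) (a b : ℝ) : ∃ C : ℝ, ∀ u ∈ Set.Icc a b, ‖f u‖ ≤ C := by
  have hloc : ∀ x : ℝ, ∃ C : ℝ, ∀ᶠ y in nhds x, ‖f y‖ ≤ C := by
    intro x
    obtain ⟨hr, l, hl⟩ := hf x
    refine ⟨max (‖f x‖ + 1) (‖l‖ + 1), ?_⟩
    have h1 : ∀ᶠ y in nhdsWithin x (Set.Ici x), ‖f y‖ ≤ ‖f x‖ + 1 := by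
      have := (hr.norm.eventually_lt_const (lt_add_one ‖f x‖))
      exact this.mono fun y hy => hy.le
    have h2 : ∀ᶠ y in nhdsWithin x (Set.Iio x), ‖f y‖ ≤ ‖l‖ + 1 := by
      have := (hl.norm.eventually_lt_const (lt_add_one ‖l‖))
      exact this.mono fun y hy => hy.le
    have hsup : nhdsWithin x (Set.Iio x) ⊔ nhdsWithin x (Set.Ici x) = nhds x :=
      nhdsLT_sup_nhdsGE x
    rw [← hsup, Filter.eventually_sup]
    constructor
    · exact h2.mono fun y hy => hy.trans (le_max_right _ _)
    · exact h1.mono fun y hy => hy.trans (le_max_left _ _)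
  choose C hC using hloc
  obtain ⟨t, _, ht⟩ := (isCompact_Icc : IsCompact (Set.Icc a b)).elim_nhds_subcover
    (fun x => {y | ‖f y‖ ≤ C x}) (fun x _ => hC x)
  refine ⟨(insert (0:ℝ) (t.image C)).max' (by simp), ?_⟩
  intro u hu
  obtain ⟨x, hxt, hx⟩ := Set.mem_iUnion₂.1 (ht hu)
  exact le_trans hx (Finset.le_max' _ _ (Finset.mem_insert.2 (Or.inr
    (Finset.mem_image.2 ⟨x, hxt, rfl⟩))))

/-- Uniform oscillation bound for the Skorohod map `Γ^h` on the half plane: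
for `h` ranging over a compact subset `H` of `(0,∞) × ℝ` there is a single
constant `κ` with `osc(Γ^h ψ, [s,t]) ≤ κ · osc(ψ, [s,t])`. -/
theorem skorohod_map_oscillation_bound (H : Set (EuclideanSpace ℝ (Fin 2)))
    (hHc : IsCompact H) (hHpos : ∀ h ∈ H, 0 < h 0) :
    ∃ κ : ℝ, 0 < κ ∧
      ∀ h ∈ H, ∀ ψ : ℝ → EuclideanSpace ℝ (Fin 2),
        IsCadlag ψ → 0 ≤ ψ 0 0 →
        ∀ φ : ℝ → EuclideanSpace ℝ (Fin 2),
          (φ = fun t => ψ t +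
            ((sSup ((fun u => max (-(ψ u 0)) 0) '' Set.Icc 0 t)) / ((‖h‖⁻¹ • h) 0)) •
              (‖h‖⁻¹ • h)) →
          ∀ s t : ℝ, 0 ≤ s → s ≤ t →
            sSup ((fun p : ℝ × ℝ => ‖φ p.1 - φ p.2‖) '' (Set.Icc s t ×ˢ Set.Icc s t))
              ≤ κ * sSup ((fun p : ℝ × ℝ => ‖ψ p.1 - ψ p.2‖) '' (Set.Icc s t ×ˢ Set.Icc s t)) := by
  -- the uniform constant
  have hcont : ContinuousOn (fun h : EuclideanSpace ℝ (Fin 2) => 1 + ‖h‖ / h 0) H := by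
    apply ContinuousOn.add continuousOn_const
    exact ContinuousOn.div continuous_norm.continuousOn
      (EuclideanSpace.proj (0 : Fin 2)).continuous.continuousOn
      (fun h hh => (hHpos h hh).ne')
  obtain ⟨C, hC⟩ := hHc.exists_bound_of_continuousOn hcont
  refine ⟨max C 1, lt_of_lt_of_le one_pos (le_max_right _ _), ?_⟩
  intro h hH ψ hψ _ φ hφ s t hs hst
  have h0t : (0:ℝ) ≤ t := hs.trans hst
  have hh0 : 0 < h 0 := hHpos h hH
  have hne : h ≠ 0 := fun hz => by simp [hz] at hh0
  have hnorm : 0 < ‖h‖ := norm_pos_iff.2 hne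
  have hunit : ‖(‖h‖⁻¹ • h : EuclideanSpace ℝ (Fin 2))‖ = 1 := norm_smul_inv_norm hne
  set d : ℝ := (‖h‖⁻¹ • h) 0 with hd_def
  have hd_eq : d = ‖h‖⁻¹ * h 0 := by simp [hd_def]
  have hd : 0 < d := by rw [hd_eq]; positivity
  have hdinv : d⁻¹ = ‖h‖ / h 0 := by
    rw [hd_eq, mul_inv, inv_inv, div_eq_mul_inv]
  -- boundedness of ψ on [0, t]
  obtain ⟨B, hB⟩ := hψ.bounded_on_Icc 0 t
  set g : ℝ → ℝ := fun u => max (-(ψ u 0)) 0 with hg_def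
  have hg_bdd : ∀ r, 0 ≤ r → r ≤ t → BddAbove (g '' Set.Icc 0 r) := by
    intro r hr0 hrt
    refine ⟨max B 0, ?_⟩
    rintro x ⟨u, hu, rfl⟩
    have hu' : u ∈ Set.Icc 0 t := ⟨hu.1, hu.2.trans hrt⟩
    have : -(ψ u 0) ≤ B := by
      have := (abs_coord_le_norm (ψ u) 0).trans (hB u hu')
      have := neg_le_of_abs_le this
      linarith [neg_le_of_abs_le ((abs_coord_le_norm (ψ u) 0).trans (hB u hu'))]
    exact max_le (this.trans (le_max_left _ _)) (le_max_right _ _)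
  set M : ℝ → ℝ := fun r => sSup (g '' Set.Icc 0 r) with hM_def
  -- the ψ-oscillation
  set oscS := (fun p : ℝ × ℝ => ‖ψ p.1 - ψ p.2‖) '' (Set.Icc s t ×ˢ Set.Icc s t) with hoscS
  set osc : ℝ := sSup oscS with hosc_def
  have hmemst : (s, s) ∈ Set.Icc s t ×ˢ Set.Icc s t := by
    constructor <;> exact ⟨le_refl s, hst⟩
  have hoscS_ne : oscS.Nonempty := ⟨_, ⟨(s, s), hmemst, rfl⟩⟩
  have hoscS_bdd : BddAbove oscS := by
    refine ⟨2 * B, ?_⟩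
    rintro x ⟨⟨u, v⟩, ⟨hu, hv⟩, rfl⟩
    have hu' : u ∈ Set.Icc 0 t := ⟨hs.trans hu.1, hu.2⟩
    have hv' : v ∈ Set.Icc 0 t := ⟨hs.trans hv.1, hv.2⟩
    calc ‖ψ u - ψ v‖ ≤ ‖ψ u‖ + ‖ψ v‖ := norm_sub_le _ _
      _ ≤ 2 * B := by linarith [hB u hu', hB v hv']
  have hosc_nonneg : 0 ≤ osc := by
    have : ‖ψ s - ψ s‖ ≤ osc := le_csSup hoscS_bdd ⟨(s, s), hmemst, rfl⟩
    simpa using this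
  have hosc_mem : ∀ u ∈ Set.Icc s t, ∀ v ∈ Set.Icc s t, ‖ψ u - ψ v‖ ≤ osc := by
    intro u hu v hv
    exact le_csSup hoscS_bdd ⟨(u, v), ⟨hu, hv⟩, rfl⟩
  -- key estimate on M
  have key : ∀ v ∈ Set.Icc s t, ∀ u ∈ Set.Icc s t, v ≤ u →
      M v ≤ M u ∧ M u ≤ M v + osc := by
    intro v hv u hu hvu
    have hv0 : (0:ℝ) ≤ v := hs.trans hv.1
    have hu0 : (0:ℝ) ≤ u := hs.trans hu.1
    have hne_v : (g '' Set.Icc 0 v).Nonempty := ⟨g 0, ⟨0, by simp [hv0], rfl⟩⟩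
    have hne_u : (g '' Set.Icc 0 u).Nonempty := ⟨g 0, ⟨0, by simp [hu0], rfl⟩⟩
    constructor
    · exact csSup_le_csSup (hg_bdd u hu0 hu.2) hne_v
        (Set.image_mono (Set.Icc_subset_Icc le_rfl hvu))
    · apply csSup_le hne_u
      rintro x ⟨r, hr, rfl⟩
      rcases le_or_gt r v with hrv | hrv
      · have : g r ≤ M v := le_csSup (hg_bdd v hv0 hv.2) ⟨r, ⟨hr.1, hrv⟩, rfl⟩
        linarith
      · -- r ∈ [s, t]
        have hrst : r ∈ Set.Icc s t := ⟨hv.1.trans hrv.le, hr.2.trans hu.2⟩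
        have hgv : g v ≤ M v := le_csSup (hg_bdd v hv0 hv.2) ⟨v, ⟨hv0, le_rfl⟩, rfl⟩
        rcases le_or_gt (-(ψ r 0)) 0 with hneg | hpos
        · have : g r = 0 := max_eq_right hneg
          rw [this]
          have : (0:ℝ) ≤ g v := le_max_right _ _
          linarith
        · have hgr : g r = -(ψ r 0) := max_eq_left hpos.le
          have hcoord : ψ v 0 - ψ r 0 ≤ ‖ψ v - ψ r‖ := by
            have := abs_coord_le_norm (ψ v - ψ r) 0
            have heq : (ψ v - ψ r) 0 = ψ v 0 - ψ r 0 := by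
              simp [PiLp.sub_apply]
            rw [heq] at this
            exact (le_abs_self _).trans this
          have hgv' : -(ψ v 0) ≤ g v := le_max_left _ _
          have hoscvr : ‖ψ v - ψ r‖ ≤ osc := hosc_mem v hv r hrst
          rw [hgr]
          linarith
  -- final bound on φ-oscillation
  refine csSup_le ⟨_, ⟨(s, s), hmemst, rfl⟩⟩ ?_
  rintro x ⟨⟨u, v⟩, ⟨hu, hv⟩, rfl⟩
  have hMdiff : |M u - M v| ≤ osc := by
    rcases le_total v u with hvu | huv
    · obtain ⟨h1, h2⟩ := key v hv u hu hvu
      rw [abs_le]; constructor <;> linarith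
    · obtain ⟨h1, h2⟩ := key u hu v hv huv
      rw [abs_le]; constructor <;> linarith
  have hφdiff : φ u - φ v = (ψ u - ψ v) + ((M u - M v) / d) • (‖h‖⁻¹ • h) := by
    rw [hφ]
    simp only [hM_def, hg_def, hd_def]
    rw [sub_div, sub_smul]
    abel
  have hbound : ‖φ u - φ v‖ ≤ osc + osc / d := by
    rw [hφdiff]
    calc ‖(ψ u - ψ v) + ((M u - M v) / d) • (‖h‖⁻¹ • h)‖
        ≤ ‖ψ u - ψ v‖ + ‖((M u - M v) / d) • (‖h‖⁻¹ • h)‖ := norm_add_le _ _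
      _ = ‖ψ u - ψ v‖ + |(M u - M v) / d| := by
          rw [norm_smul, hunit, mul_one, Real.norm_eq_abs]
      _ = ‖ψ u - ψ v‖ + |M u - M v| / d := by
          rw [abs_div, abs_of_pos hd]
      _ ≤ osc + osc / d := by
          gcongr
          exact hosc_mem u hu v hv
  calc ‖φ u - φ v‖ ≤ osc + osc / d := hbound
    _ = (1 + ‖h‖ / h 0) * osc := by
        rw [div_eq_mul_inv, hdinv]; ring
    _ ≤ max C 1 * osc := by
        apply mul_le_mul_of_nonneg_right _ hosc_nonneg
        exact (le_abs_self _).trans ((hC h hH).trans (le_max_left _ _))
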